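/- arXiv:0707.3268 — 4 statements merged into one kernel-verified Lean document; each statement's English description precedes it below -/
import Mathlib

section
/- Let A be a commutative ring and let f be a formal power series in one variable over A with constant coefficient 1, f = ∑_{k≥0} f_k X^k with f_0 = 1. Fix a natural number n. In the ring A[y][[u]] of formal power series in u with coefficients polynomials in y, write f(c·u) := ∑_{k≥0} f_k c^k u^k for any c ∈ A[y], and consider the difference D := (∏_{j=0}^{n} f((y − j)·u)) − f(y·u)^{n+1}. Then for every k ≥ 0, the coefficient of u^k in D is a polynomial in y which is either zero or has degree strictly less than k; in particular the coefficient of u^0 in D is zero. -/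
open Polynomial Finset

theorem statement0_key {A : Type*} [CommRing A] (f : PowerSeries A)
    (hf : PowerSeries.constantCoeff f = 1) (n : ℕ)
    (fp : PowerSeries (Polynomial A)) (hfp : fp = PowerSeries.map Polynomial.C f)
    (D : PowerSeries (Polynomial A))
    (hD : D = (∏ j ∈ Finset.range (n + 1),
        PowerSeries.rescale (Polynomial.X - (j : Polynomial A)) fp)
      - (PowerSeries.rescale Polynomial.X fp) ^ (n + 1)) (k : ℕ) :
    (PowerSeries.coeff k D).degree < (k : ℕ) := by
  rcases subsingleton_or_nontrivial A with h | h
  · have : PowerSeries.coeff k D = 0 := Subsingleton.elim _ _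
    rw [this, degree_zero]
    exact WithBot.bot_lt_coe k
  have hcoe : PowerSeries.coeff k D =
      ∑ l ∈ finsuppAntidiag (range (n + 1)) k,
        ((∏ j ∈ range (n + 1), (X - (j : Polynomial A)) ^ (l j)
          - X ^ k) * ∏ j ∈ range (n + 1), C (PowerSeries.coeff (l j) f)) := by
    rw [hD, map_sub, PowerSeries.coeff_prod, PowerSeries.coeff_pow, ← Finset.sum_sub_distrib]
    refine Finset.sum_congr rfl fun l hl => ?_
    rw [mem_finsuppAntidiag] at hl
    have hXk : ∏ j ∈ range (n + 1), (X : Polynomial A) ^ (l j) = X ^ k := by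
      rw [Finset.prod_pow_eq_pow_sum, hl.1]
    simp only [PowerSeries.coeff_rescale, hfp, PowerSeries.coeff_map]
    rw [Finset.prod_mul_distrib, Finset.prod_mul_distrib, hXk, sub_mul]
  rw [hcoe]
  refine lt_of_le_of_lt (Polynomial.degree_sum_le _ _) ?_
  refine Finset.sup_lt_iff (WithBot.bot_lt_coe k) |>.2 fun l hl => ?_
  rw [mem_finsuppAntidiag] at hl
  have hmonic : (∏ j ∈ range (n + 1), (X - (j : Polynomial A)) ^ (l j)).Monic := by
    refine monic_prod_of_monic _ _ fun j _ => ?_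
    exact (monic_X_sub_C _).pow _
  have hdeg : (∏ j ∈ range (n + 1), (X - (j : Polynomial A)) ^ (l j)).degree = (k : WithBot ℕ) := by
    rw [Polynomial.degree_eq_natDegree hmonic.ne_zero]
    norm_cast
    rw [Polynomial.natDegree_prod_of_monic _ _ fun j _ => (monic_X_sub_C _).pow _]
    calc ∑ j ∈ range (n + 1), ((X - (j : Polynomial A)) ^ (l j)).natDegree
        = ∑ j ∈ range (n + 1), l j := by
          refine Finset.sum_congr rfl fun j _ => ?_
          rw [← Polynomial.C_eq_natCast, (monic_X_sub_C _).natDegree_pow, natDegree_X_sub_C, mul_one]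
      _ = k := hl.1
  have hsub : ((∏ j ∈ range (n + 1), (X - (j : Polynomial A)) ^ (l j)) - X ^ k).degree
      < (k : WithBot ℕ) := by
    rcases eq_or_ne (∏ j ∈ range (n + 1), (X - (j : Polynomial A)) ^ (l j)) (X ^ k) with he | he
    · rw [he, sub_self, degree_zero]; exact WithBot.bot_lt_coe k
    · have h1 : (∏ j ∈ range (n + 1), (X - (j : Polynomial A)) ^ (l j)).degree
          = ((X : Polynomial A) ^ k).degree := by simp [hdeg]
      have h2 : (∏ j ∈ range (n + 1), (X - (j : Polynomial A)) ^ (l j)).leadingCoeff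
          = ((X : Polynomial A) ^ k).leadingCoeff := by
        simp [hmonic.leadingCoeff, leadingCoeff_X_pow]
      have := Polynomial.degree_sub_lt h1 hmonic.ne_zero h2
      rwa [hdeg] at this
  calc ((_ - X ^ k) * ∏ j ∈ range (n + 1), C (PowerSeries.coeff (l j) f)).degree
      ≤ _ + (∏ j ∈ range (n + 1), C (PowerSeries.coeff (l j) f)).degree :=
        Polynomial.degree_mul_le _ _
    _ ≤ _ + 0 := add_le_add (le_refl _) (by rw [← map_prod]; exact degree_C_le)
    _ < (k : ℕ) := by rw [add_zero]; exact hsub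

/-- For `f ∈ A[[X]]` with constant coefficient `1` and `n : ℕ`, the
difference `D := (∏_{j=0}^{n} f((y − j)·u)) − f(y·u)^{n+1}` in `A[y][[u]]` has, for every
`k`, a `u^k`-coefficient which is zero or a polynomial in `y` of degree `< k`;
in particular its `u^0`-coefficient is zero. -/
theorem statement0 {A : Type*} [CommRing A] (f : PowerSeries A)
    (hf : PowerSeries.constantCoeff f = 1) (n : ℕ)
    (fp : PowerSeries (Polynomial A)) (hfp : fp = PowerSeries.map Polynomial.C f)
    (D : PowerSeries (Polynomial A))
    (hD : D = (∏ j ∈ Finset.range (n + 1),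
        PowerSeries.rescale (Polynomial.X - (j : Polynomial A)) fp)
      - (PowerSeries.rescale Polynomial.X fp) ^ (n + 1)) :
    (∀ k : ℕ, PowerSeries.coeff k D = 0 ∨
      (PowerSeries.coeff k D).degree < (k : ℕ)) ∧
    PowerSeries.coeff 0 D = 0 := by
  have key := statement0_key f hf n fp hfp D hD
  refine ⟨fun k => Or.inr (key k), ?_⟩
  have h0 := key 0
  rw [Nat.cast_zero] at h0
  exact Polynomial.degree_eq_bot.mp (Nat.WithBot.lt_zero_iff.mp h0)
end

section
/- Let A be a commutative ℚ-algebra and let f ∈ A[[X]] be a formal power series with constant coefficient 1. Set F(X) := f(X)·f(−X). Then for every natural number n: ∑_{a=0}^{n} ((−1)^a / (a!·(n−a)!)) · [u^n]( f(−(n−a+1)·u) · f(−u)^{−1} · ∏_{w=a−n}^{a} F(w·u) ) = (−1)^n · [X^n]( f(X) · F(X)^{n+1} ). Here [u^n] denotes extraction of the coefficient of u^n, f(c·u) (resp. F(c·u)) denotes rescaling of f (resp. F) by the integer c, and f(−u)^{−1} is the multiplicative inverse of the unit power series f(−u). -/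
open Finset Polynomial

namespace Statement2Aux

/-! ### The rational combinatorial identity -/

private def S (n k : ℕ) : ℚ :=
  ∑ a ∈ Finset.range (n + 1), (-1 : ℚ) ^ a * (n.choose a : ℚ) * (a : ℚ) ^ k

private lemma S_succ (n k : ℕ) :
    S (n + 1) k = -∑ j ∈ Finset.range k, (k.choose j : ℚ) * S n j := by
  have expand : ∀ b : ℕ, ((b : ℚ) + 1) ^ k
      = ∑ j ∈ Finset.range (k + 1), (k.choose j : ℚ) * (b : ℚ) ^ j := by
    intro b
    rw [add_pow]
    exact Finset.sum_congr rfl fun j hj => by ring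
  have claimA : ∑ b ∈ Finset.range (n + 1),
      (-1 : ℚ) ^ (b + 1) * (n.choose (b + 1) : ℚ) * ((b : ℚ) + 1) ^ k
      = S n k - (0 : ℚ) ^ k := by
    have h1 : ∑ a ∈ Finset.range (n + 2), (-1 : ℚ) ^ a * (n.choose a : ℚ) * (a : ℚ) ^ k
        = ∑ b ∈ Finset.range (n + 1),
            (-1 : ℚ) ^ (b + 1) * (n.choose (b + 1) : ℚ) * ((b : ℚ) + 1) ^ k
          + (0 : ℚ) ^ k := by
      rw [Finset.sum_range_succ']
      simp [Nat.cast_add, Nat.cast_one]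
    have h2 : ∑ a ∈ Finset.range (n + 2), (-1 : ℚ) ^ a * (n.choose a : ℚ) * (a : ℚ) ^ k
        = S n k := by
      rw [Finset.sum_range_succ, Nat.choose_succ_self]
      simp [S]
    rw [← h2, h1]; ring
  have claimB : ∑ b ∈ Finset.range (n + 1),
      (-1 : ℚ) ^ b * (n.choose b : ℚ) * ((b : ℚ) + 1) ^ k
      = ∑ j ∈ Finset.range (k + 1), (k.choose j : ℚ) * S n j := by
    have : ∀ b ∈ Finset.range (n + 1),
        (-1 : ℚ) ^ b * (n.choose b : ℚ) * ((b : ℚ) + 1) ^ k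
        = ∑ j ∈ Finset.range (k + 1),
            (k.choose j : ℚ) * ((-1 : ℚ) ^ b * (n.choose b : ℚ) * (b : ℚ) ^ j) := by
      intro b _
      rw [expand b, Finset.mul_sum]
      exact Finset.sum_congr rfl fun j _ => by ring
    rw [Finset.sum_congr rfl this, Finset.sum_comm]
    exact Finset.sum_congr rfl fun j _ => by rw [S, Finset.mul_sum]
  have hmain : S (n + 1) k
      = S n k - ∑ j ∈ Finset.range (k + 1), (k.choose j : ℚ) * S n j := by
    have h0 : S (n + 1) k
        = ∑ b ∈ Finset.range (n + 1),
            (-1 : ℚ) ^ (b + 1) * ((n + 1).choose (b + 1) : ℚ) * ((b : ℚ) + 1) ^ k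
          + (0 : ℚ) ^ k := by
      rw [S, Finset.sum_range_succ']
      simp [Nat.cast_add, Nat.cast_one]
    have h3 : ∀ b ∈ Finset.range (n + 1),
        (-1 : ℚ) ^ (b + 1) * ((n + 1).choose (b + 1) : ℚ) * ((b : ℚ) + 1) ^ k
        = -((-1 : ℚ) ^ b * (n.choose b : ℚ) * ((b : ℚ) + 1) ^ k)
          + (-1 : ℚ) ^ (b + 1) * (n.choose (b + 1) : ℚ) * ((b : ℚ) + 1) ^ k := by
      intro b _
      rw [Nat.choose_succ_succ]
      push_cast
      ring
    rw [h0, Finset.sum_congr rfl h3, Finset.sum_add_distrib, Finset.sum_neg_distrib,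
      claimA, claimB]
    ring
  rw [hmain, Finset.sum_range_succ, Nat.choose_self]
  ring

private lemma S_lt : ∀ n k : ℕ, k < n → S n k = 0 := by
  intro n
  induction n with
  | zero => intro k hk; omega
  | succ n ih =>
    intro k hk
    rw [S_succ]
    have : ∀ j ∈ Finset.range k, (k.choose j : ℚ) * S n j = 0 := by
      intro j hj
      have hj' := Finset.mem_range.mp hj
      rw [ih j (by omega), mul_zero]
    rw [Finset.sum_congr rfl this, Finset.sum_const_zero, neg_zero]

private lemma S_diag : ∀ n : ℕ, S n n = (-1 : ℚ) ^ n * (n.factorial : ℚ) := by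
  intro n
  induction n with
  | zero => simp [S]
  | succ n ih =>
    rw [S_succ]
    rw [Finset.sum_eq_single n]
    · rw [ih, Nat.choose_succ_self_right]
      push_cast [Nat.factorial_succ]
      ring
    · intro j hj hjn
      rw [S_lt n j (by
        have := Finset.mem_range.mp hj
        omega), mul_zero]
    · intro h
      exact absurd (Finset.self_mem_range_succ n) (by simpa using h)

private lemma key (n k : ℕ) (hk : k ≤ n) :
    ∑ a ∈ Finset.range (n + 1),
        (-1 : ℚ) ^ a / ((a.factorial : ℚ) * ((n - a).factorial : ℚ)) * (a : ℚ) ^ k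
      = if k = n then (-1 : ℚ) ^ n else 0 := by
  have hstep : ∀ a ∈ Finset.range (n + 1),
      (-1 : ℚ) ^ a / ((a.factorial : ℚ) * ((n - a).factorial : ℚ)) * (a : ℚ) ^ k
      = (-1 : ℚ) ^ a * (n.choose a : ℚ) * (a : ℚ) ^ k / (n.factorial : ℚ) := by
    intro a ha
    have han : a ≤ n := Nat.lt_succ_iff.mp (Finset.mem_range.mp ha)
    rw [Nat.cast_choose ℚ han]
    have h1 : ((a.factorial : ℚ) * ((n - a).factorial : ℚ)) ≠ 0 := by
      positivity
    have h2 : (n.factorial : ℚ) ≠ 0 := by positivity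
    field_simp
  rw [Finset.sum_congr rfl hstep, ← Finset.sum_div]
  have : ∑ a ∈ Finset.range (n + 1), (-1 : ℚ) ^ a * (n.choose a : ℚ) * (a : ℚ) ^ k = S n k :=
    rfl
  rw [this]
  rcases eq_or_lt_of_le hk with rfl | hlt
  · rw [S_diag, if_pos rfl]
    have h2 : (k.factorial : ℚ) ≠ 0 := by positivity
    field_simp
  · rw [S_lt n k hlt, if_neg (by omega), zero_div]

/-! ### Power series over polynomials: degree bounds and top coefficients -/

variable {A : Type*} [CommRing A]

private def good (g : PowerSeries (Polynomial A)) : Prop :=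
  ∀ k, (PowerSeries.coeff k g).natDegree ≤ k

private noncomputable def top (g : PowerSeries (Polynomial A)) : PowerSeries A :=
  PowerSeries.mk fun k => (PowerSeries.coeff k g).coeff k

private lemma good_one : good (1 : PowerSeries (Polynomial A)) := by
  intro k
  rw [PowerSeries.coeff_one]
  split <;> simp

private lemma top_one : top (1 : PowerSeries (Polynomial A)) = 1 := by
  ext k
  rw [top, PowerSeries.coeff_mk, PowerSeries.coeff_one, PowerSeries.coeff_one]
  split <;> simp_all

private lemma good_mul {g h : PowerSeries (Polynomial A)} (hg : good g) (hh : good h) :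
    good (g * h) := by
  intro k
  rw [PowerSeries.coeff_mul]
  refine Polynomial.natDegree_sum_le_of_forall_le _ _ fun p hp => ?_
  have hpk : p.1 + p.2 = k := Finset.HasAntidiagonal.mem_antidiagonal.mp hp
  calc (PowerSeries.coeff p.1 g * PowerSeries.coeff p.2 h).natDegree
      ≤ _ + _ := Polynomial.natDegree_mul_le
    _ ≤ p.1 + p.2 := add_le_add (hg p.1) (hh p.2)
    _ = k := hpk

private lemma top_mul {g h : PowerSeries (Polynomial A)} (hg : good g) (hh : good h) :
    top (g * h) = top g * top h := by
  ext k
  rw [top, PowerSeries.coeff_mk, PowerSeries.coeff_mul, PowerSeries.coeff_mul,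
    Polynomial.finset_sum_coeff]
  refine Finset.sum_congr rfl fun p hp => ?_
  have hpk : p.1 + p.2 = k := Finset.HasAntidiagonal.mem_antidiagonal.mp hp
  rw [top, top, PowerSeries.coeff_mk, PowerSeries.coeff_mk, ← hpk,
    Polynomial.coeff_mul_add_eq_of_natDegree_le (hg p.1) (hh p.2)]

private lemma good_top_prod {ι : Type*} (s : Finset ι) (g : ι → PowerSeries (Polynomial A))
    (hg : ∀ i ∈ s, good (g i)) :
    good (∏ i ∈ s, g i) ∧ top (∏ i ∈ s, g i) = ∏ i ∈ s, top (g i) := by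
  classical
  induction s using Finset.induction_on with
  | empty => simpa using ⟨good_one, top_one⟩
  | @insert a s ha ih =>
    have hga : good (g a) := hg a (Finset.mem_insert_self a s)
    have hgs : ∀ i ∈ s, good (g i) := fun i hi => hg i (Finset.mem_insert_of_mem hi)
    obtain ⟨h1, h2⟩ := ih hgs
    rw [Finset.prod_insert ha, Finset.prod_insert ha]
    exact ⟨good_mul hga h1, by rw [top_mul hga h1, h2]⟩

private lemma good_mapC (w : PowerSeries A) :
    good (PowerSeries.map (Polynomial.C (R := A)) w) := by
  intro k
  rw [PowerSeries.coeff_map]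
  simp

private lemma top_mapC (w : PowerSeries A) (hw : PowerSeries.constantCoeff w = 1) :
    top (PowerSeries.map (Polynomial.C (R := A)) w) = 1 := by
  ext k
  rw [top, PowerSeries.coeff_mk, PowerSeries.coeff_map, PowerSeries.coeff_one]
  cases k with
  | zero => simpa using hw
  | succ k => simp

private lemma good_rescale_linear (c : A) (w : PowerSeries A) :
    good (PowerSeries.rescale (Polynomial.X + Polynomial.C c)
      (PowerSeries.map (Polynomial.C (R := A)) w)) := by
  intro k
  rw [PowerSeries.coeff_rescale, PowerSeries.coeff_map]
  calc ((Polynomial.X + Polynomial.C c) ^ k * Polynomial.C (PowerSeries.coeff k w)).natDegree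
      ≤ _ + _ := Polynomial.natDegree_mul_le
    _ ≤ k * 1 + 0 := by
        refine add_le_add (Polynomial.natDegree_pow_le.trans ?_) (le_of_eq (Polynomial.natDegree_C _))
        exact Nat.mul_le_mul_left k ((Polynomial.natDegree_add_le _ _).trans (by simp [Polynomial.natDegree_X_le]))
    _ = k := by omega

private lemma top_rescale_linear (c : A) (w : PowerSeries A) :
    top (PowerSeries.rescale (Polynomial.X + Polynomial.C c)
      (PowerSeries.map (Polynomial.C (R := A)) w)) = w := by
  ext k
  rw [top, PowerSeries.coeff_mk, PowerSeries.coeff_rescale, PowerSeries.coeff_map,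
    Polynomial.coeff_mul_C, Polynomial.coeff_X_add_C_pow]
  simp

private lemma map_rescale {R S : Type*} [CommSemiring R] [CommSemiring S] (φ : R →+* S)
    (c : R) (w : PowerSeries R) :
    PowerSeries.map φ (PowerSeries.rescale c w)
      = PowerSeries.rescale (φ c) (PowerSeries.map φ w) := by
  ext k
  rw [PowerSeries.coeff_map, PowerSeries.coeff_rescale, PowerSeries.coeff_rescale,
    PowerSeries.coeff_map, map_mul, map_pow]

private lemma map_eval_mapC (x : A) (w : PowerSeries A) :
    PowerSeries.map (Polynomial.evalRingHom x) (PowerSeries.map (Polynomial.C (R := A)) w)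
      = w := by
  ext k
  rw [PowerSeries.coeff_map, PowerSeries.coeff_map]
  simp

end Statement2Aux

open Statement2Aux Finset Polynomial in
/-- for `f ∈ A[[X]]` with constant coefficient `1` and `F(X) = f(X)f(−X)`,
`∑_{a=0}^{n} ((−1)^a/(a!(n−a)!)) [u^n](f(−(n−a+1)u) f(−u)⁻¹ ∏_{w=a−n}^{a} F(wu))
  = (−1)^n [X^n](f(X) F(X)^{n+1})`. -/
theorem statement2 {A : Type*} [CommRing A] [Algebra ℚ A] (f : PowerSeries A)
    (hf : PowerSeries.constantCoeff f = 1) (n : ℕ)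
    (F : PowerSeries A) (hF : F = f * PowerSeries.rescale (-1) f) :
    ∑ a ∈ Finset.range (n + 1),
      ((-1 : ℚ) ^ a / (a.factorial * (n - a).factorial) : ℚ) •
        (PowerSeries.coeff n
          (PowerSeries.rescale (((-(((n : ℤ) - a) + 1)) : ℤ) : A) f *
            Ring.inverse (PowerSeries.rescale (-1) f) *
            ∏ i ∈ Finset.range (n + 1),
              PowerSeries.rescale ((((a : ℤ) - n + i) : ℤ) : A) F))
      = (-1 : ℚ) ^ n • PowerSeries.coeff n (f * F ^ (n + 1)) := by
  classical
  set v : PowerSeries A := Ring.inverse (PowerSeries.rescale (-1 : A) f) with hv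
  -- `rescale (-1) f` is a unit with constant coefficient 1, hence `constantCoeff v = 1`
  have hu0 : PowerSeries.constantCoeff (PowerSeries.rescale (-1 : A) f) = 1 := by
    rw [← PowerSeries.coeff_zero_eq_constantCoeff_apply, PowerSeries.coeff_rescale]
    simpa [PowerSeries.coeff_zero_eq_constantCoeff_apply] using hf
  have huu : IsUnit (PowerSeries.rescale (-1 : A) f) := by
    rw [PowerSeries.isUnit_iff_constantCoeff, hu0]
    exact isUnit_one
  have hv0 : PowerSeries.constantCoeff v = 1 := by
    have h1 : v * PowerSeries.rescale (-1 : A) f = 1 := Ring.inverse_mul_cancel _ huu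
    have := congrArg (PowerSeries.constantCoeff) h1
    rwa [map_mul, hu0, mul_one, map_one] at this
  -- the universal series over `A[x]`
  set G : PowerSeries (Polynomial A) :=
    PowerSeries.rescale (Polynomial.X + Polynomial.C (((-(n : ℤ) - 1) : ℤ) : A))
        (PowerSeries.map (Polynomial.C (R := A)) f) *
      PowerSeries.map (Polynomial.C (R := A)) v *
      ∏ i ∈ Finset.range (n + 1),
        PowerSeries.rescale (Polynomial.X + Polynomial.C ((((i : ℤ) - n) : ℤ) : A))
          (PowerSeries.map (Polynomial.C (R := A)) F) with hG
  set H : Polynomial A := PowerSeries.coeff n G with hH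
  -- step 1: evaluation of H gives the coefficients in the sum
  have step1 : ∀ a : ℕ,
      PowerSeries.coeff n
          (PowerSeries.rescale (((-(((n : ℤ) - a) + 1)) : ℤ) : A) f *
            v *
            ∏ i ∈ Finset.range (n + 1),
              PowerSeries.rescale ((((a : ℤ) - n + i) : ℤ) : A) F)
        = Polynomial.eval ((a : A)) H := by
    intro a
    have hmap : PowerSeries.map (Polynomial.evalRingHom (a : A)) G
        = PowerSeries.rescale (((-(((n : ℤ) - a) + 1)) : ℤ) : A) f *
            v *
            ∏ i ∈ Finset.range (n + 1),
              PowerSeries.rescale ((((a : ℤ) - n + i) : ℤ) : A) F := by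
      rw [hG, map_mul, map_mul, map_prod]
      congr 1
      · congr 1
        · rw [map_rescale, map_eval_mapC]
          congr 1
          simp only [coe_evalRingHom, eval_add, eval_X, eval_C]
          push_cast
          ring
        · exact map_eval_mapC _ _
      · refine Finset.prod_congr rfl fun i _ => ?_
        rw [map_rescale, map_eval_mapC]
        congr 1
        simp only [coe_evalRingHom, eval_add, eval_X, eval_C]
        push_cast
        ring
    have := PowerSeries.coeff_map (f := Polynomial.evalRingHom (a : A)) n G
    rw [hmap] at this
    rw [this, ← hH]
    rfl
  -- step 2 and 3 : goodness, degree bound and top coefficient of H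
  have hgoodprod := good_top_prod (Finset.range (n + 1))
      (fun i => PowerSeries.rescale (Polynomial.X + Polynomial.C ((((i : ℤ) - n) : ℤ) : A))
        (PowerSeries.map (Polynomial.C (R := A)) F))
      (fun i _ => good_rescale_linear _ _)
  have hgoodG : good G := by
    rw [hG]
    exact good_mul (good_mul (good_rescale_linear _ _) (good_mapC _)) hgoodprod.1
  have hdeg : H.natDegree ≤ n := hgoodG n
  have htopG : top G = f * F ^ (n + 1) := by
    rw [hG, top_mul (good_mul (good_rescale_linear _ _) (good_mapC _)) hgoodprod.1,
      top_mul (good_rescale_linear _ _) (good_mapC _), hgoodprod.2,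
      top_rescale_linear, top_mapC _ hv0, mul_one]
    simp only [top_rescale_linear]
    rw [Finset.prod_const, Finset.card_range]
  have hHn : H.coeff n = PowerSeries.coeff n (f * F ^ (n + 1)) := by
    have := congrArg (PowerSeries.coeff n) htopG
    rwa [top, PowerSeries.coeff_mk] at this
  -- step 4: finish
  calc
    ∑ a ∈ Finset.range (n + 1),
      ((-1 : ℚ) ^ a / (a.factorial * (n - a).factorial) : ℚ) •
        (PowerSeries.coeff n
          (PowerSeries.rescale (((-(((n : ℤ) - a) + 1)) : ℤ) : A) f *
            Ring.inverse (PowerSeries.rescale (-1) f) *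
            ∏ i ∈ Finset.range (n + 1),
              PowerSeries.rescale ((((a : ℤ) - n + i) : ℤ) : A) F))
      = ∑ a ∈ Finset.range (n + 1), ∑ k ∈ Finset.range (n + 1),
          H.coeff k * (algebraMap ℚ A
            ((-1 : ℚ) ^ a / ((a.factorial : ℚ) * ((n - a).factorial : ℚ)) * (a : ℚ) ^ k)) := by
        refine Finset.sum_congr rfl fun a _ => ?_
        rw [step1 a, Polynomial.eval_eq_sum_range' (lt_of_le_of_lt hdeg (Nat.lt_succ_self n)),
          Finset.smul_sum]
        refine Finset.sum_congr rfl fun k _ => ?_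
        rw [Algebra.smul_def, map_mul, map_pow, map_natCast]
        push_cast
        ring
    _ = ∑ k ∈ Finset.range (n + 1),
          H.coeff k * (algebraMap ℚ A (if k = n then (-1 : ℚ) ^ n else 0)) := by
        rw [Finset.sum_comm]
        refine Finset.sum_congr rfl fun k hk => ?_
        rw [← Finset.mul_sum, ← map_sum, key n k (Nat.lt_succ_iff.mp (Finset.mem_range.mp hk))]
    _ = H.coeff n * algebraMap ℚ A ((-1 : ℚ) ^ n) := by
        rw [Finset.sum_congr rfl (fun k _ => by
          rw [apply_ite (algebraMap ℚ A), map_zero, mul_ite, mul_zero])]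
        rw [Finset.sum_ite_eq' (Finset.range (n + 1)) n
          (fun k => H.coeff k * algebraMap ℚ A ((-1 : ℚ) ^ n))]
        simp
    _ = (-1 : ℚ) ^ n • PowerSeries.coeff n (f * F ^ (n + 1)) := by
        rw [hHn, Algebra.smul_def, mul_comm]
end

section
/- Let A be a commutative ℚ-algebra and let f ∈ A[[X]] be a formal power series with constant coefficient 1. Set F(X) := f(X)·f(−X) and G(X) := X·F(X)^{−1}, and let g ∈ A[[X]] be a power series with g(0) = 0 such that G(g(X)) = X (g is the compositional inverse of G). Define Z₃ ∈ A[[X]] by [X^n] Z₃ := ∑_{a=0}^{n} ((−1)^a / (a!·(n−a)!)) · [u^n]( f(−(n−a+1)·u) · f(−u)^{−1} · ∏_{w=a−n}^{a} F(w·u) ) for each n ≥ 0. Then Z₃ = f(−g(X)) · g′(X), where f(−g(X)) denotes the substitution of the power series −g(X) (which has zero constant term) into f, and g′ is the formal derivative of g. -/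
/-- Formal composition `f(g(X))` of power series; it agrees with the usual substitution
whenever `g` has zero constant coefficient (then `coeff n (g^k) = 0` for `k > n`). -/
noncomputable def PowerSeries.comp' {A : Type*} [CommRing A] (f g : PowerSeries A) :
    PowerSeries A :=
  PowerSeries.mk fun n => ∑ k ∈ Finset.range (n + 1),
    PowerSeries.coeff k f * PowerSeries.coeff n (g ^ k)


open PowerSeries Finset

namespace Stmt3

lemma map_ring_inverse {B C : Type*} [CommRing B] [CommRing C] (φ : B →+* C) {x : B}
    (hx : IsUnit x) : φ (Ring.inverse x) = Ring.inverse (φ x) := by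
  obtain ⟨u, rfl⟩ := hx
  have h : φ ↑u = ↑(Units.map (φ : B →* C) u) := rfl
  rw [Ring.inverse_unit, h, Ring.inverse_unit]
  exact (Units.coe_map_inv (φ : B →* C) u).symm

variable {A : Type*} [CommRing A]

lemma inverse_eq_of_mul_eq_one {a b : A} (h : a * b = 1) : Ring.inverse a = b := by
  have hu : IsUnit a := IsUnit.of_mul_eq_one _ h
  calc Ring.inverse a = Ring.inverse a * (a * b) := by rw [h, mul_one]
  _ = (Ring.inverse a * a) * b := by ring
  _ = b := by rw [Ring.inverse_mul_cancel _ hu, one_mul]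

section comp

variable {g : PowerSeries A} (hg0 : constantCoeff g = 0)

include hg0 in
lemma coeff_pow_g {k n : ℕ} (h : n < k) : coeff n (g ^ k) = 0 := by
  induction k generalizing n with
  | zero => omega
  | succ k ih =>
    rw [pow_succ, coeff_mul]
    apply Finset.sum_eq_zero
    rintro ⟨i, j⟩ hij
    rw [HasAntidiagonal.mem_antidiagonal] at hij
    rcases Nat.eq_zero_or_pos j with h0 | h0
    · have : (coeff j) g = 0 := by
        subst h0; rw [coeff_zero_eq_constantCoeff_apply, hg0]
      rw [this, mul_zero]
    · have hik : i < k := by omega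
      rw [ih hik, zero_mul]

include hg0 in
lemma coeff_comp'_eq (P : PowerSeries A) {n m : ℕ} (hnm : n < m) :
    coeff n (P.comp' g) = ∑ k ∈ range m, coeff k P * coeff n (g ^ k) := by
  rw [comp', coeff_mk]
  apply Finset.sum_subset (Finset.range_subset_range.mpr (by omega))
  intro k hk hnk
  rw [mem_range] at hnk
  rw [coeff_pow_g hg0 (by omega), mul_zero]

include hg0 in
lemma coeff_eval₂ (R : Polynomial A) (n : ℕ) :
    coeff n (R.eval₂ (C) g) = ∑ k ∈ range (n + 1), R.coeff k * coeff n (g ^ k) := by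
  have hN : R.natDegree < R.natDegree + n + 1 := by omega
  rw [Polynomial.eval₂_eq_sum_range' (C) hN g, map_sum]
  simp_rw [coeff_C_mul]
  refine (Finset.sum_subset (Finset.range_subset_range.mpr (by omega)) ?_).symm
  intro k hk hnk
  rw [mem_range] at hnk
  rw [coeff_pow_g hg0 (by omega), mul_zero]

include hg0 in
lemma coeff_comp'_eval₂ (P : PowerSeries A) {n s : ℕ} (hs : s ≤ n) :
    coeff s (P.comp' g) = coeff s ((P.trunc (n+1)).eval₂ (C) g) := by
  rw [coeff_comp'_eq hg0 P (show s < s + 1 by omega), coeff_eval₂ hg0]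
  apply Finset.sum_congr rfl
  intro k hk
  rw [mem_range] at hk
  rw [PowerSeries.coeff_trunc, if_pos (by omega)]

include hg0 in
lemma comp'_mul (P Q : PowerSeries A) : (P * Q).comp' g = P.comp' g * Q.comp' g := by
  ext n
  set R₁ := trunc (n+1) P with hR₁
  set R₂ := trunc (n+1) Q with hR₂
  have key : coeff n ((P * Q).comp' g) = coeff n ((R₁ * R₂).eval₂ (C) g) := by
    rw [coeff_comp'_eq hg0 _ (show n < n + 1 by omega), coeff_eval₂ hg0]
    apply Finset.sum_congr rfl
    intro k hk
    rw [mem_range] at hk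
    congr 1
    have h2 := congrArg (fun p => Polynomial.coeff p k) (trunc_trunc_mul_trunc (n := n+1) P Q)
    simp only [PowerSeries.coeff_trunc, if_pos (show k < n + 1 by omega)] at h2
    rw [← Polynomial.coe_mul, Polynomial.coeff_coe] at h2
    exact h2.symm
  rw [key, Polynomial.eval₂_mul, coeff_mul, coeff_mul]
  apply Finset.sum_congr rfl
  rintro ⟨i, j⟩ hij
  rw [HasAntidiagonal.mem_antidiagonal] at hij
  rw [coeff_comp'_eval₂ hg0 P (show i ≤ n by omega),
    coeff_comp'_eval₂ hg0 Q (show j ≤ n by omega)]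

lemma comp'_one : (1 : PowerSeries A).comp' g = 1 := by
  ext n
  rw [comp', coeff_mk]
  rw [Finset.sum_eq_single 0]
  · simp
  · intro k hk hk0
    rw [PowerSeries.coeff_one, if_neg hk0, zero_mul]
  · intro h
    simp at h

lemma comp'_add (P Q : PowerSeries A) : (P + Q).comp' g = P.comp' g + Q.comp' g := by
  ext n
  simp [comp', coeff_mk, add_mul, Finset.sum_add_distrib]

lemma comp'_C (a : A) : (C a).comp' g = C a := by
  ext n
  rw [comp', coeff_mk, Finset.sum_eq_single 0]
  · simp [coeff_C]
  · intro k hk hk0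
    rw [coeff_C, if_neg hk0, zero_mul]
  · intro h; simp at h

include hg0 in
lemma comp'_X : (X : PowerSeries A).comp' g = g := by
  ext n
  rw [comp', coeff_mk]
  cases n with
  | zero =>
    rw [Finset.sum_eq_single 0]
    · simp [coeff_zero_eq_constantCoeff_apply, hg0]
    · intro k hk hk0
      rw [mem_range] at hk
      rw [coeff_X, if_neg (by omega), zero_mul]
    · intro h; simp at h
  | succ n =>
    rw [Finset.sum_eq_single 1]
    · simp
    · intro k hk hk0; rw [coeff_X, if_neg hk0, zero_mul]
    · intro h; simp at h

variable (g) in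
/-- Composition with `g` as a ring hom. -/
noncomputable def compHom (hg0 : constantCoeff g = 0) : PowerSeries A →+* PowerSeries A where
  toFun P := P.comp' g
  map_one' := comp'_one
  map_mul' := comp'_mul hg0
  map_zero' := by ext n; simp [comp', coeff_mk]
  map_add' := comp'_add

@[simp] lemma compHom_apply (P : PowerSeries A) : compHom g hg0 P = P.comp' g := rfl

lemma constantCoeff_comp' (P : PowerSeries A) :
    constantCoeff (P.comp' g) = constantCoeff P := by
  rw [← coeff_zero_eq_constantCoeff_apply, ← coeff_zero_eq_constantCoeff_apply, comp', coeff_mk]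
  simp

end comp

end Stmt3

namespace Stmt3

variable {A : Type*} [CommRing A]

/-- shift: drop the constant coefficient and divide by X. -/
noncomputable def shift (H : PowerSeries A) : PowerSeries A := mk fun n => coeff (n+1) H

@[simp] lemma coeff_shift (H : PowerSeries A) (n : ℕ) :
    coeff n (shift H) = coeff (n+1) H := by rw [shift, coeff_mk]

lemma eq_shift (H : PowerSeries A) : H = C (constantCoeff H) + X * shift H := by
  ext n
  cases n with
  | zero => simp [coeff_zero_eq_constantCoeff_apply]
  | succ n => simp [coeff_C, coeff_succ_X_mul]

lemma coeff_derivFun (F : PowerSeries A) (n : ℕ) :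
    coeff n (derivativeFun F) = coeff (n + 1) F * (n + 1) :=
  coeff_derivative F n

lemma derivFun_pow (F : PowerSeries A) (m : ℕ) :
    derivativeFun (F ^ (m+1)) = (m+1) • (F ^ m * derivativeFun F) := by
  induction m with
  | zero => simp
  | succ m ih =>
    have h0 : F ^ (m+2) = F ^ (m+1) * F := by ring
    rw [h0, derivativeFun_mul, ih]
    rw [smul_eq_mul, smul_eq_mul]
    have h1 : F * ((m+1) • (F ^ m * derivativeFun F)) = (m+1) • (F ^ (m+1) * derivativeFun F) := by
      rw [mul_smul_comm]
      congr 1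
      ring
    rw [h1, succ_nsmul (F ^ (m+1) * derivativeFun F) (m+1)]
    abel

/-- `coeff k (F' * F^m) * (m+1) = coeff (k+1) (F^(m+1)) * (k+1)` -/
lemma ident2 (F : PowerSeries A) (m k : ℕ) :
    coeff k (derivativeFun F * F ^ m) * ((m : A) + 1)
      = coeff (k+1) (F ^ (m+1)) * ((k : A) + 1) := by
  have h := congrArg (coeff k) (derivFun_pow F m)
  rw [coeff_derivFun, map_nsmul, nsmul_eq_mul] at h
  rw [mul_comm (derivativeFun F) (F ^ m)]
  push_cast at h ⊢
  linear_combination -h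

section Qalg
variable [Algebra ℚ A]

lemma cancel_succ {x y : A} (m : ℕ) (h : x * ((m : A) + 1) = y * ((m : A) + 1)) : x = y := by
  have hm : ((m : ℚ) + 1) ≠ 0 := by positivity
  have hx : ∀ z : A, z * ((m : A) + 1) = ((m : ℚ) + 1) • z := by
    intro z
    rw [Algebra.smul_def, map_add, map_natCast, map_one]
    ring
  rw [hx, hx] at h
  have h2 := congrArg (fun z => (((m : ℚ) + 1))⁻¹ • z) h
  simpa [smul_smul, inv_mul_cancel₀ hm] using h2

lemma keyZ (F : PowerSeries A) (m : ℕ) :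
    coeff (m+1) (F ^ (m+1) - X * (derivativeFun F * F ^ m)) = 0 := by
  rw [map_sub, coeff_succ_X_mul]
  have h2 : coeff m (derivativeFun F * F ^ m) = coeff (m+1) (F ^ (m+1)) :=
    cancel_succ m (ident2 F m m)
  rw [h2, sub_self]

end Qalg

lemma coeff_succ_mul_decomp (R W : PowerSeries A) (n : ℕ) :
    coeff (n+1) (R * W)
      = constantCoeff R * coeff (n+1) W + coeff n (shift R * W) := by
  conv_lhs => rw [eq_shift R]
  rw [add_mul, map_add, coeff_C_mul, mul_assoc, coeff_succ_X_mul]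

section Lagrange

variable [Algebra ℚ A] {F g : PowerSeries A}
  (hF0 : constantCoeff F = 1)
  (hg0 : constantCoeff g = 0)
  (hgX : g = X * F.comp' g)

include hF0 hgX in
omit [Algebra ℚ A] in
lemma g_one : coeff 1 g = 1 := by
  conv_lhs => rw [hgX]
  rw [coeff_succ_X_mul, coeff_zero_eq_constantCoeff_apply, constantCoeff_comp', hF0]

include hg0 hgX in
omit [Algebra ℚ A] in
lemma comp'_decomp (R : PowerSeries A) :
    R.comp' g = C (constantCoeff R) + X * ((F * shift R).comp' g) := by
  conv_lhs => rw [eq_shift R]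
  rw [comp'_add, comp'_C]
  congr 1
  rw [comp'_mul hg0, comp'_X hg0, comp'_mul hg0]
  nth_rewrite 1 [hgX]
  ring

include hF0 hg0 hgX in
lemma Dlem : ∀ n (R : PowerSeries A), coeff (n+1) (R.comp' g) =
    coeff (n+1) (R * (F ^ n * (F - X * derivativeFun F))) := by
  intro n
  induction n with
  | zero =>
    intro R
    rw [comp'_decomp hg0 hgX R, map_add, coeff_C, if_neg (by omega), zero_add,
      coeff_succ_X_mul, coeff_zero_eq_constantCoeff_apply, constantCoeff_comp', map_mul, hF0,
      one_mul, ← coeff_zero_eq_constantCoeff_apply, coeff_shift]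
    rw [pow_zero, one_mul, coeff_succ_mul_decomp]
    have e1 : coeff 1 (F - X * derivativeFun F) = 0 := by
      rw [map_sub, coeff_succ_X_mul, coeff_derivFun]
      push_cast
      ring
    have e2 : coeff 0 (shift R * (F - X * derivativeFun F)) = coeff 1 R := by
      rw [coeff_zero_eq_constantCoeff_apply, map_mul, map_sub, hF0]
      have : constantCoeff (X * derivativeFun F) = 0 := by
        rw [← coeff_zero_eq_constantCoeff_apply, coeff_zero_X_mul]
      rw [this, sub_zero, mul_one, ← coeff_zero_eq_constantCoeff_apply, coeff_shift]
    rw [e1, e2]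
    ring
  | succ n ih =>
    intro R
    rw [comp'_decomp hg0 hgX R, map_add, coeff_C, if_neg (by omega), zero_add,
      coeff_succ_X_mul, ih (F * shift R)]
    have harr : (F * shift R) * (F ^ n * (F - X * derivativeFun F))
        = shift R * (F ^ (n+1) * (F - X * derivativeFun F)) := by ring
    rw [harr]
    rw [coeff_succ_mul_decomp R _ (n+1)]
    have hz : coeff (n+2) (F ^ (n+1) * (F - X * derivativeFun F)) = 0 := by
      have h3 : F ^ (n+1) * (F - X * derivativeFun F)
          = F ^ (n+2) - X * (derivativeFun F * F ^ (n+1)) := by ring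
      rw [h3]
      exact keyZ F (n+1)
    rw [hz, mul_zero, zero_add]

include hF0 hg0 hgX in
lemma Clem : ∀ n (H : PowerSeries A), coeff n (H.comp' g * derivativeFun g)
    = coeff n (H * F ^ (n+1)) := by
  intro n
  induction n with
  | zero =>
    intro H
    rw [coeff_zero_eq_constantCoeff_apply, map_mul, constantCoeff_comp']
    have h1 : constantCoeff (derivativeFun g) = 1 := by
      rw [← coeff_zero_eq_constantCoeff_apply, coeff_derivFun, g_one hF0 hgX]
      push_cast
      ring
    rw [h1, mul_one, coeff_zero_eq_constantCoeff_apply, map_mul, pow_one, hF0, mul_one]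
  | succ n ih =>
    intro H
    conv_lhs => rw [comp'_decomp hg0 hgX H]
    rw [add_mul, map_add, coeff_C_mul, mul_assoc, coeff_succ_X_mul, ih (F * shift H)]
    have harr : (F * shift H) * F ^ (n+1) = shift H * F ^ (n+2) := by ring
    rw [harr, coeff_succ_mul_decomp H (F ^ (n+2)) n]
    have hdg : coeff (n+1) (derivativeFun g) = coeff (n+1) (F ^ (n+2)) := by
      rw [coeff_derivFun]
      have h2 : coeff (n+2) g = coeff (n+1) (F.comp' g) := by
        conv_lhs => rw [hgX]
        rw [coeff_succ_X_mul]
      rw [h2, Dlem hF0 hg0 hgX n F]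
      have h3 : F * (F ^ n * (F - X * derivativeFun F))
          = F ^ (n+2) - X * (derivativeFun F * F ^ (n+1)) := by ring
      rw [h3, map_sub, coeff_succ_X_mul]
      have h4 := ident2 F (n+1) n
      push_cast at h4 ⊢
      linear_combination -h4
    rw [hdg]

end Lagrange

end Stmt3

namespace Stmt3

variable {A : Type*} [CommRing A]

/-- `h ∈ A[t][[u]]` is good if its `m`-th coefficient has degree `≤ m` in `t`. -/
def Good (h : PowerSeries (Polynomial A)) : Prop :=
  ∀ m, (coeff m h).natDegree ≤ m

/-- the "leading diagonal" of a good series. -/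
noncomputable def tau (h : PowerSeries (Polynomial A)) : PowerSeries A :=
  mk fun m => (coeff m h).coeff m

@[simp] lemma coeff_tau (h : PowerSeries (Polynomial A)) (m : ℕ) :
    coeff m (tau h) = (coeff m h).coeff m := by rw [tau, coeff_mk]

lemma good_one : Good (1 : PowerSeries (Polynomial A)) := by
  intro m
  rw [PowerSeries.coeff_one]
  split <;> simp

lemma tau_one : tau (1 : PowerSeries (Polynomial A)) = 1 := by
  ext m
  rw [coeff_tau, PowerSeries.coeff_one, PowerSeries.coeff_one]
  split
  · subst ‹m = 0›; simp
  · simp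

lemma good_mul {h₁ h₂ : PowerSeries (Polynomial A)} (H1 : Good h₁) (H2 : Good h₂) :
    Good (h₁ * h₂) := by
  intro m
  rw [PowerSeries.coeff_mul]
  apply Polynomial.natDegree_sum_le_of_forall_le
  rintro ⟨i, j⟩ hij
  rw [HasAntidiagonal.mem_antidiagonal] at hij
  calc ((coeff i h₁) * (coeff j h₂)).natDegree
      ≤ (coeff i h₁).natDegree + (coeff j h₂).natDegree :=
        Polynomial.natDegree_mul_le
    _ ≤ m := by have := H1 i; have := H2 j; omega

lemma tau_mul {h₁ h₂ : PowerSeries (Polynomial A)} (H1 : Good h₁) (H2 : Good h₂) :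
    tau (h₁ * h₂) = tau h₁ * tau h₂ := by
  ext m
  rw [coeff_tau, PowerSeries.coeff_mul, PowerSeries.coeff_mul, Polynomial.finset_sum_coeff]
  apply Finset.sum_congr rfl
  rintro ⟨i, j⟩ hij
  rw [HasAntidiagonal.mem_antidiagonal] at hij
  subst hij
  rw [Polynomial.coeff_mul_add_eq_of_natDegree_le (H1 i) (H2 j), coeff_tau, coeff_tau]

lemma good_tau_prod {ι : Type*} (s : Finset ι) (h : ι → PowerSeries (Polynomial A))
    (H : ∀ i ∈ s, Good (h i)) :
    Good (∏ i ∈ s, h i) ∧ tau (∏ i ∈ s, h i) = ∏ i ∈ s, tau (h i) := by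
  induction s using Finset.cons_induction with
  | empty => simpa using ⟨good_one, tau_one⟩
  | cons a s ha ih =>
    rw [Finset.prod_cons, Finset.prod_cons]
    have hH := H a (Finset.mem_cons_self a s)
    obtain ⟨ihg, iht⟩ := ih (fun i hi => H i (Finset.mem_cons_of_mem hi))
    exact ⟨good_mul hH ihg, by rw [tau_mul hH ihg, iht]⟩

lemma good_inverse {h : PowerSeries (Polynomial A)}
    (h0 : constantCoeff h = 1) (H : Good h) : Good (Ring.inverse h) := by
  have hu : IsUnit h := by
    rw [isUnit_iff_constantCoeff, h0]; exact isUnit_one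
  intro m
  induction m using Nat.strong_induction_on with
  | _ m ih =>
    match m with
    | 0 =>
      have : coeff 0 (Ring.inverse h) = 1 := by
        rw [coeff_zero_eq_constantCoeff_apply, map_ring_inverse _ hu, h0, Ring.inverse_one]
      rw [this]
      simp
    | m + 1 =>
      have e : ∑ x ∈ HasAntidiagonal.antidiagonal (m+1),
          coeff x.1 h * coeff x.2 (Ring.inverse h) = 0 := by
        rw [← PowerSeries.coeff_mul, Ring.mul_inverse_cancel _ hu, PowerSeries.coeff_one,
          if_neg (by omega)]
      have hmem : ((0 : ℕ), m+1) ∈ HasAntidiagonal.antidiagonal (m+1) := by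
        rw [HasAntidiagonal.mem_antidiagonal]
        simp
      rw [← Finset.sum_erase_add _ _ hmem] at e
      have h00 : coeff 0 h = 1 := by
        rw [coeff_zero_eq_constantCoeff_apply, h0]
      rw [h00, one_mul] at e
      have h1 : coeff (m+1) (Ring.inverse h)
          = - ∑ x ∈ (HasAntidiagonal.antidiagonal (m+1)).erase (0, m+1),
              coeff x.1 h * coeff x.2 (Ring.inverse h) :=
        eq_neg_of_add_eq_zero_right e
      rw [h1, Polynomial.natDegree_neg]
      apply Polynomial.natDegree_sum_le_of_forall_le
      rintro ⟨i, j⟩ hij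
      have hij2 := Finset.mem_of_mem_erase hij
      rw [HasAntidiagonal.mem_antidiagonal] at hij2
      have hne := Finset.ne_of_mem_erase hij
      have hi : i ≠ 0 := by
        rintro rfl
        apply hne
        have : j = m + 1 := by omega
        rw [this]
      have hj : j < m + 1 := by omega
      calc (coeff i h * coeff j (Ring.inverse h)).natDegree
          ≤ (coeff i h).natDegree
            + (coeff j (Ring.inverse h)).natDegree :=
            Polynomial.natDegree_mul_le
        _ ≤ m + 1 := by have := H i; have := ih j hj; omega

lemma tau_inverse {h : PowerSeries (Polynomial A)}
    (h0 : constantCoeff h = 1) (H : Good h) :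
    tau (Ring.inverse h) = Ring.inverse (tau h) := by
  have hu : IsUnit h := by rw [isUnit_iff_constantCoeff, h0]; exact isUnit_one
  have e : tau h * tau (Ring.inverse h) = 1 := by
    rw [← tau_mul H (good_inverse h0 H), Ring.mul_inverse_cancel _ hu, tau_one]
  exact (inverse_eq_of_mul_eq_one e).symm

/-- the map `A[[u]] → A[t][[u]]`. -/
noncomputable def mapC : PowerSeries A →+* PowerSeries (Polynomial A) :=
  PowerSeries.map (Polynomial.C)

@[simp] lemma coeff_mapC (f : PowerSeries A) (m : ℕ) :
    coeff m (mapC f) = Polynomial.C (coeff m f) := by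
  rw [mapC, PowerSeries.coeff_map]

lemma good_rescale_linear (c : A) (f : PowerSeries A) :
    Good (rescale (Polynomial.X + Polynomial.C c) (mapC f)) := by
  intro m
  rw [coeff_rescale, coeff_mapC]
  calc ((Polynomial.X + Polynomial.C c) ^ m * Polynomial.C (coeff m f)).natDegree
      ≤ ((Polynomial.X + Polynomial.C c) ^ m).natDegree
        + (Polynomial.C (coeff m f)).natDegree := Polynomial.natDegree_mul_le
    _ ≤ m := by
        have h1 : ((Polynomial.X + Polynomial.C c) ^ m).natDegree ≤ m * 1 :=
          Polynomial.natDegree_pow_le.trans (by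
            have : (Polynomial.X + Polynomial.C c).natDegree ≤ 1 :=
              (Polynomial.natDegree_add_le _ _).trans
                (by simp [Polynomial.natDegree_C, Polynomial.natDegree_X_le])
            exact Nat.mul_le_mul_left m this)
        have h2 : (Polynomial.C (coeff m f)).natDegree = 0 := Polynomial.natDegree_C _
        omega

lemma tau_rescale_linear (c : A) (f : PowerSeries A) :
    tau (rescale (Polynomial.X + Polynomial.C c) (mapC f)) = f := by
  ext m
  rw [coeff_tau, coeff_rescale, coeff_mapC, Polynomial.coeff_mul_C,
    Polynomial.coeff_X_add_C_pow]
  simp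

lemma good_rescale_const (c : A) (f : PowerSeries A) :
    Good (rescale (Polynomial.C c) (mapC f)) := by
  intro m
  rw [coeff_rescale, coeff_mapC, ← map_pow, ← map_mul, Polynomial.natDegree_C]
  omega

lemma tau_rescale_const (c : A) (f : PowerSeries A) :
    tau (rescale (Polynomial.C c) (mapC f)) = PowerSeries.C (constantCoeff f) := by
  ext m
  rw [coeff_tau, coeff_rescale, coeff_mapC, ← map_pow, ← map_mul, Polynomial.coeff_C]
  cases m with
  | zero => simp [coeff_zero_eq_constantCoeff_apply]
  | succ m => simp [coeff_C]

/-- evaluation at `x`, as a map on power series over polynomials -/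
noncomputable def evP (x : A) : PowerSeries (Polynomial A) →+* PowerSeries A :=
  PowerSeries.map (Polynomial.evalRingHom x)

@[simp] lemma coeff_evP (x : A) (h : PowerSeries (Polynomial A)) (m : ℕ) :
    coeff m (evP x h) = (coeff m h).eval x := by
  rw [evP, PowerSeries.coeff_map]
  rfl

lemma evP_rescale (x : A) (b : Polynomial A) (h : PowerSeries (Polynomial A)) :
    evP x (rescale b h) = rescale (b.eval x) (evP x h) := by
  ext m
  rw [coeff_evP, coeff_rescale, coeff_rescale, coeff_evP]
  simp [Polynomial.eval_mul, Polynomial.eval_pow]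

@[simp] lemma evP_mapC (x : A) (f : PowerSeries A) : evP x (mapC f) = f := by
  ext m
  rw [coeff_evP, coeff_mapC, Polynomial.eval_C]

end Stmt3

namespace Stmt3

open Polynomial in
lemma comp_X_add_one_coeff {A : Type*} [CommRing A] (p : Polynomial A) (m : ℕ) :
    (p.comp (Polynomial.X + 1)).coeff m
      = ∑ k ∈ Finset.range (p.natDegree + 1), p.coeff k * (k.choose m : A) := by
  have hrep : p.comp (Polynomial.X + 1)
      = ∑ k ∈ Finset.range (p.natDegree + 1),
          Polynomial.C (p.coeff k) * (Polynomial.X + 1) ^ k := by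
    conv_lhs => rw [p.as_sum_range' (p.natDegree + 1) (Nat.lt_succ_self _)]
    rw [Polynomial.sum_comp]
    apply Finset.sum_congr rfl
    intro k hk
    rw [← Polynomial.C_mul_X_pow_eq_monomial, Polynomial.mul_comp, Polynomial.C_comp,
      Polynomial.pow_comp, Polynomial.X_comp]
  rw [hrep, Polynomial.finset_sum_coeff]
  apply Finset.sum_congr rfl
  intro k hk
  rw [Polynomial.coeff_C_mul, Polynomial.coeff_X_add_one_pow]

open Polynomial in
lemma delta_poly {A : Type*} [CommRing A] (p : Polynomial A) {n : ℕ} (hp : p.natDegree ≤ n + 1) :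
    (p.comp (Polynomial.X + 1) - p).natDegree ≤ n ∧
    (p.comp (Polynomial.X + 1) - p).coeff n = p.coeff (n + 1) * ((n : A) + 1) := by
  have hcoeff : ∀ m, (p.comp (Polynomial.X + 1) - p).coeff m
      = (∑ k ∈ Finset.range (p.natDegree + 1), p.coeff k * (k.choose m : A)) - p.coeff m := by
    intro m
    rw [Polynomial.coeff_sub, comp_X_add_one_coeff]
  constructor
  · rw [Polynomial.natDegree_le_iff_coeff_eq_zero]
    intro m hm
    rw [hcoeff]
    have hsum : ∑ k ∈ Finset.range (p.natDegree + 1), p.coeff k * (k.choose m : A)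
        = p.coeff m := by
      rw [Finset.sum_eq_single m]
      · rw [Nat.choose_self, Nat.cast_one, mul_one]
      · intro b hb hbm
        rw [Finset.mem_range] at hb
        have : b < m := by omega
        rw [Nat.choose_eq_zero_of_lt this, Nat.cast_zero, mul_zero]
      · intro hm'
        rw [Finset.mem_range] at hm'
        rw [Polynomial.coeff_eq_zero_of_natDegree_lt (by omega), zero_mul]
    rw [hsum, sub_self]
  · rw [hcoeff]
    have hext : ∑ k ∈ Finset.range (p.natDegree + 1), p.coeff k * (k.choose n : A)
        = ∑ k ∈ Finset.range (n + 2), p.coeff k * (k.choose n : A) := by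
      apply Finset.sum_subset (Finset.range_subset_range.mpr (by omega))
      intro k hk hk2
      rw [Finset.mem_range] at hk2
      rw [Polynomial.coeff_eq_zero_of_natDegree_lt (by omega), zero_mul]
    rw [hext, Finset.sum_range_succ, Finset.sum_range_succ]
    have hzero : ∑ k ∈ Finset.range n, p.coeff k * (k.choose n : A) = 0 := by
      apply Finset.sum_eq_zero
      intro k hk
      rw [Finset.mem_range] at hk
      rw [Nat.choose_eq_zero_of_lt hk, Nat.cast_zero, mul_zero]
    rw [hzero, zero_add, Nat.choose_self, Nat.cast_one, mul_one,
      Nat.choose_succ_self_right]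
    push_cast
    ring

open fwdDiff in
lemma fwd_poly {A : Type*} [CommRing A] (n : ℕ) : ∀ p : Polynomial A, p.natDegree ≤ n →
    (Δ_[(1 : ℕ)])^[n] (fun a : ℕ => p.eval (a : A)) 0 = n.factorial • p.coeff n := by
  induction n with
  | zero =>
    intro p hp
    simp only [Function.iterate_zero, id_eq, Nat.factorial_zero, one_smul]
    rw [Polynomial.coeff_zero_eq_eval_zero]
    norm_num
  | succ n ih =>
    intro p hp
    rw [Function.iterate_succ_apply]
    have hfd : Δ_[(1 : ℕ)] (fun a : ℕ => p.eval (a : A))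
        = fun a : ℕ => (p.comp (Polynomial.X + 1) - p).eval (a : A) := by
      funext a
      rw [fwdDiff]
      rw [Polynomial.eval_sub, Polynomial.eval_comp, Polynomial.eval_add, Polynomial.eval_X,
        Polynomial.eval_one]
      push_cast
      ring
    rw [hfd]
    obtain ⟨h1, h2⟩ := delta_poly p hp
    rw [ih _ h1, h2, Nat.factorial_succ, nsmul_eq_mul, nsmul_eq_mul]
    push_cast
    ring

open fwdDiff in
lemma sum_formula {A : Type*} [CommRing A] [Algebra ℚ A] (p : Polynomial A) (n : ℕ)
    (hp : p.natDegree ≤ n) :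
    ∑ a ∈ Finset.range (n + 1),
        ((-1 : ℚ) ^ a / (a.factorial * (n - a).factorial) : ℚ) • p.eval ((a : ℕ) : A)
      = (-1 : A) ^ n * p.coeff n := by
  have hfd := fwdDiff_iter_eq_sum_shift (1 : ℕ) (fun a : ℕ => p.eval ((a : ℕ) : A)) n 0
  rw [fwd_poly n p hp] at hfd
  -- rewrite our sum
  have hscal : ∀ a ∈ Finset.range (n + 1),
      ((-1 : ℚ) ^ a / (a.factorial * (n - a).factorial) : ℚ) • p.eval ((a : ℕ) : A)
        = ((n.factorial : ℚ))⁻¹ • ((-1 : ℚ) ^ n •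
            ((((-1 : ℤ) ^ (n - a) * (n.choose a : ℤ)) : ℤ) • p.eval ((a : ℕ) : A))) := by
    intro a ha
    rw [Finset.mem_range] at ha
    have ha' : a ≤ n := by omega
    rw [← Int.cast_smul_eq_zsmul ℚ, smul_smul, smul_smul]
    congr 1
    have hch : (n.choose a : ℚ) * a.factorial * (n - a).factorial = n.factorial := by
      rw_mod_cast [Nat.choose_mul_factorial_mul_factorial ha']
    have hfa : (a.factorial : ℚ) ≠ 0 := Nat.cast_ne_zero.mpr (Nat.factorial_ne_zero a)
    have hfna : ((n - a).factorial : ℚ) ≠ 0 := Nat.cast_ne_zero.mpr (Nat.factorial_ne_zero _)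
    have hfn : (n.factorial : ℚ) ≠ 0 := Nat.cast_ne_zero.mpr (Nat.factorial_ne_zero n)
    have hsign : (-1 : ℚ) ^ n * (-1 : ℚ) ^ (n - a) = (-1 : ℚ) ^ a := by
      have : (-1 : ℚ) ^ (n - a) * (-1 : ℚ) ^ a = (-1 : ℚ) ^ n := by
        rw [← pow_add]
        congr 1
        omega
      have h2 : ((-1 : ℚ) ^ (n - a)) * ((-1 : ℚ) ^ (n - a)) = 1 := by
        rw [← pow_add, ← two_mul, pow_mul]
        norm_num
      calc (-1 : ℚ) ^ n * (-1 : ℚ) ^ (n - a)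
          = ((-1 : ℚ) ^ (n - a) * (-1 : ℚ) ^ a) * (-1 : ℚ) ^ (n - a) := by rw [this]
        _ = (((-1 : ℚ) ^ (n - a)) * ((-1 : ℚ) ^ (n - a))) * (-1 : ℚ) ^ a := by ring
        _ = (-1 : ℚ) ^ a := by rw [h2, one_mul]
    push_cast
    field_simp
    linear_combination (-(-1 : ℚ) ^ a) * hch - ((n.choose a : ℚ) * a.factorial * (n - a).factorial) * hsign
  rw [Finset.sum_congr rfl hscal, ← Finset.smul_sum, ← Finset.smul_sum]
  simp only [zero_add, smul_eq_mul, mul_one] at hfd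
  have hsum : ∑ a ∈ Finset.range (n + 1),
      ((((-1 : ℤ) ^ (n - a) * (n.choose a : ℤ)) : ℤ) • p.eval ((a : ℕ) : A))
        = n.factorial • p.coeff n := hfd.symm
  rw [hsum]
  have : ((-1 : ℚ) ^ n • (n.factorial • p.coeff n)) = n.factorial • ((-1 : ℚ) ^ n • p.coeff n) :=
    smul_comm _ _ _
  rw [this, ← Nat.cast_smul_eq_nsmul ℚ (n.factorial), smul_smul, inv_mul_cancel₀
    (Nat.cast_ne_zero.mpr (Nat.factorial_ne_zero n)), one_smul]
  rw [Algebra.smul_def, map_pow, map_neg, map_one]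

end Stmt3

namespace Stmt3

variable {A : Type*} [CommRing A]

lemma constantCoeff_rescale (b : A) (h : PowerSeries A) :
    constantCoeff (rescale b h) = constantCoeff h := by
  rw [← coeff_zero_eq_constantCoeff_apply, ← coeff_zero_eq_constantCoeff_apply,
    coeff_rescale, pow_zero, one_mul]

lemma comp'_neg (f g : PowerSeries A) : f.comp' (-g) = (rescale (-1 : A) f).comp' g := by
  ext n
  rw [PowerSeries.comp', PowerSeries.comp', coeff_mk, coeff_mk]
  apply Finset.sum_congr rfl
  intro k hk
  rw [coeff_rescale]
  have hC : (PowerSeries.C ((-1 : A) ^ k)) = (-1 : PowerSeries A) ^ k := by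
    rw [map_pow, map_neg, map_one]
  rw [neg_pow, ← hC, coeff_C_mul]
  ring

end Stmt3


/-- Lemma 3 of the paper: with `F(X) = f(X)f(−X)`, `G(X) = X·F(X)⁻¹` and `g`
the compositional inverse of `G`, the series `Z₃` with
`[X^n] Z₃ = ∑_{a=0}^{n} ((−1)^a/(a!(n−a)!)) [u^n](f(−(n−a+1)u) f(−u)⁻¹ ∏_{w=a−n}^{a} F(wu))`
equals `f(−g(X))·g′(X)`. -/
theorem statement3 {A : Type*} [CommRing A] [Algebra ℚ A] (f : PowerSeries A)
    (hf : PowerSeries.constantCoeff f = 1)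
    (F G g : PowerSeries A)
    (hF : F = f * PowerSeries.rescale (-1) f)
    (hG : G = PowerSeries.X * Ring.inverse F)
    (hg0 : PowerSeries.constantCoeff g = 0)
    (hg : PowerSeries.comp' G g = PowerSeries.X)
    (Z₃ : PowerSeries A)
    (hZ : ∀ n : ℕ, PowerSeries.coeff n Z₃ =
      ∑ a ∈ Finset.range (n + 1),
        ((-1 : ℚ) ^ a / (a.factorial * (n - a).factorial) : ℚ) •
          (PowerSeries.coeff n
            (PowerSeries.rescale (((-(((n : ℤ) - a) + 1)) : ℤ) : A) f *
              Ring.inverse (PowerSeries.rescale (-1) f) *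
              ∏ i ∈ Finset.range (n + 1),
                PowerSeries.rescale ((((a : ℤ) - n + i) : ℤ) : A) F))) :
    Z₃ = PowerSeries.comp' f (-g) * PowerSeries.derivativeFun g := by
  open Stmt3 in
  have hF0 : constantCoeff F = 1 := by
    rw [hF, map_mul, constantCoeff_rescale, hf, mul_one]
  have hFu : IsUnit F := by rw [PowerSeries.isUnit_iff_constantCoeff, hF0]; exact isUnit_one
  have hFgu : IsUnit (F.comp' g) := by
    rw [PowerSeries.isUnit_iff_constantCoeff, constantCoeff_comp', hF0]; exact isUnit_one
  -- the fixed point equation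
  have hgX : g = PowerSeries.X * F.comp' g := by
    have h1 : G.comp' g = g * Ring.inverse (F.comp' g) := by
      rw [hG, comp'_mul hg0, comp'_X hg0]
      congr 1
      exact map_ring_inverse (compHom g hg0) hFu
    rw [h1] at hg
    calc g = (g * Ring.inverse (F.comp' g)) * F.comp' g := by
          rw [mul_assoc, Ring.inverse_mul_cancel _ hFgu, mul_one]
    _ = PowerSeries.X * F.comp' g := by rw [hg]
  have hlagrange : ∀ n, PowerSeries.coeff n (f.comp' (-g) * PowerSeries.derivativeFun g)
      = PowerSeries.coeff n (PowerSeries.rescale (-1 : A) f * F ^ (n+1)) := by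
    intro n
    rw [comp'_neg]
    exact Clem hF0 hg0 hgX n _
  have hFsym : PowerSeries.rescale (-1 : A) F = F := by
    rw [hF, map_mul, rescale_rescale]
    norm_num
    exact mul_comm _ _
  ext n
  rw [hZ n, hlagrange n]
  -- combinatorial side
  set B := Polynomial A
  set E1 : PowerSeries B := PowerSeries.rescale
    (Polynomial.X + Polynomial.C (-((n : A) + 1))) (mapC f) with hE1
  set E2src : PowerSeries B := PowerSeries.rescale (Polynomial.C (-1 : A)) (mapC f) with hE2src
  set E2 : PowerSeries B := Ring.inverse E2src with hE2
  set E3 : PowerSeries B := ∏ i ∈ Finset.range (n+1),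
    PowerSeries.rescale (Polynomial.X + Polynomial.C ((((i : ℤ) - (n : ℤ)) : ℤ) : A)) (mapC F)
    with hE3
  set E : PowerSeries B := E1 * E2 * E3 with hE
  have hE2src0 : constantCoeff E2src = 1 := by
    rw [hE2src, constantCoeff_rescale, ← coeff_zero_eq_constantCoeff_apply, coeff_mapC,
      coeff_zero_eq_constantCoeff_apply, hf, map_one]
  have hE2srcu : IsUnit E2src := by
    rw [PowerSeries.isUnit_iff_constantCoeff, hE2src0]; exact isUnit_one
  have hgood3 := good_tau_prod (Finset.range (n+1))
    (fun i => PowerSeries.rescale (Polynomial.X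
      + Polynomial.C ((((i : ℤ) - (n : ℤ)) : ℤ) : A)) (mapC F))
    (fun i _ => good_rescale_linear _ F)
  have hgoodE : Good E := by
    rw [hE]
    exact good_mul (good_mul (good_rescale_linear _ f)
      (good_inverse hE2src0 (good_rescale_const _ f))) hgood3.1
  have htauE : tau E = f * F ^ (n+1) := by
    rw [hE, tau_mul (good_mul (good_rescale_linear _ f)
        (good_inverse hE2src0 (good_rescale_const _ f))) hgood3.1,
      tau_mul (good_rescale_linear _ f) (good_inverse hE2src0 (good_rescale_const _ f)),
      tau_rescale_linear, hgood3.2]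
    have h2 : tau E2 = 1 := by
      rw [hE2, tau_inverse hE2src0 (good_rescale_const _ f), hE2src, tau_rescale_const, hf,
        map_one, Ring.inverse_one]
    rw [h2, mul_one]
    congr 1
    rw [Finset.prod_congr rfl (fun i _ => tau_rescale_linear _ F), Finset.prod_const,
      Finset.card_range]
  set p : Polynomial A := PowerSeries.coeff n E with hp
  have hdeg : p.natDegree ≤ n := hgoodE n
  have hpcoeff : p.coeff n = PowerSeries.coeff n (f * F ^ (n+1)) := by
    rw [← htauE, coeff_tau, hp]
  -- evaluation
  have hterm : ∀ a : ℕ,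
      (PowerSeries.rescale (((-(((n : ℤ) - a) + 1)) : ℤ) : A) f *
        Ring.inverse (PowerSeries.rescale (-1 : A) f) *
        ∏ i ∈ Finset.range (n + 1),
          PowerSeries.rescale ((((a : ℤ) - n + i) : ℤ) : A) F) = evP ((a : ℕ) : A) E := by
    intro a
    rw [hE, map_mul, map_mul]
    congr 1
    · congr 1
      · rw [hE1, evP_rescale, evP_mapC]
        congr 1
        rw [Polynomial.eval_add, Polynomial.eval_X, Polynomial.eval_C]
        push_cast
        ring
      · rw [hE2, map_ring_inverse (evP ((a : ℕ) : A)) hE2srcu, hE2src, evP_rescale, evP_mapC,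
          Polynomial.eval_C]
    · rw [hE3, map_prod]
      apply Finset.prod_congr rfl
      intro i _
      rw [evP_rescale, evP_mapC]
      congr 1
      rw [Polynomial.eval_add, Polynomial.eval_X, Polynomial.eval_C]
      push_cast
      ring
  have hsum : ∀ a ∈ Finset.range (n + 1),
      ((-1 : ℚ) ^ a / (a.factorial * (n - a).factorial) : ℚ) •
          (PowerSeries.coeff n
            (PowerSeries.rescale (((-(((n : ℤ) - a) + 1)) : ℤ) : A) f *
              Ring.inverse (PowerSeries.rescale (-1) f) *
              ∏ i ∈ Finset.range (n + 1),
                PowerSeries.rescale ((((a : ℤ) - n + i) : ℤ) : A) F))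
        = ((-1 : ℚ) ^ a / (a.factorial * (n - a).factorial) : ℚ) • p.eval ((a : ℕ) : A) := by
    intro a _
    rw [hterm a, coeff_evP]
  rw [Finset.sum_congr rfl hsum, sum_formula p n hdeg, hpcoeff]
  -- final rescale juggling
  have : (-1 : A) ^ n * PowerSeries.coeff n (f * F ^ (n+1))
      = PowerSeries.coeff n (PowerSeries.rescale (-1 : A) (f * F ^ (n+1))) := by
    rw [coeff_rescale]
  rw [this, map_mul, map_pow, hFsym]
end

section
/- Let A := ℚ[ε] be the ring of dual numbers over ℚ (so ε² = 0). In A[[X]], let exp X := ∑_{k≥0} X^k/k!, cosh X := (exp X + exp(−X))/2, and set f := 1 + ε·(exp X − 1) and g := X + 2ε·X·(cosh X − 1). Working in the two-variable power series ring A[[x,y]], let g(x) and g(y) denote the images of g under X ↦ x and X ↦ y, and let f(g(x)−g(y)) and f(g(y)−g(x)) denote the substitutions of the two-variable power series g(x)−g(y), respectively g(y)−g(x) (both with zero constant term), into f. Then (x − y) · f(g(x) − g(y)) · f(g(y) − g(x)) = (g(x) − g(y)) + 2ε·( (x − y)·cosh(x − y) − (x·cosh x − y·cosh y) ), where cosh(x−y)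 denotes the substitution of x − y into cosh X, and cosh x, cosh y the images of cosh X under X ↦ x, X ↦ y. -/
/-- Substitution of a two-variable power series `g` (intended with zero constant term)
into a one-variable power series `f`: the coefficient of a monomial `d` in `f(g)` is
`∑_{k ≤ |d|} f_k · [d](g^k)`, which is the usual substitution since `[d](g^k) = 0` for
`k > |d|` when `g` has zero constant term. -/
noncomputable def PowerSeries.substMv {A : Type*} [CommRing A] (f : PowerSeries A)
    (g : MvPowerSeries (Fin 2) A) : MvPowerSeries (Fin 2) A :=
  fun d => ∑ k ∈ Finset.range (d.sum (fun _ n => n) + 1),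
    PowerSeries.coeff k f * MvPowerSeries.coeff d (g ^ k)


section Lemmas

open Finset MvPowerSeries

variable {A : Type*} [CommRing A]

local notation "wt" d => Finsupp.sum d fun _ n => n

lemma wt_add (a b : Fin 2 →₀ ℕ) : (wt (a+b)) = (wt a) + (wt b) :=
  Finsupp.sum_add_index' (fun _ => rfl) (fun _ _ _ => rfl)

lemma wt_eq_zero {a : Fin 2 →₀ ℕ} (h : (wt a) = 0) : a = 0 := by
  ext i
  by_contra hi
  have hmem : i ∈ a.support := Finsupp.mem_support_iff.mpr hi
  have := Finset.sum_eq_zero_iff.mp h i hmem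
  exact hi this

lemma coeff_pow_eq_zero {g : MvPowerSeries (Fin 2) A}
    (hg : constantCoeff (σ := Fin 2) (R := A) g = 0) :
    ∀ (k : ℕ) (d : Fin 2 →₀ ℕ), (wt d) < k → coeff d (g ^ k) = 0 := by
  intro k
  induction k with
  | zero => intro d h; omega
  | succ k ih =>
    intro d h
    rw [pow_succ, coeff_mul]
    apply Finset.sum_eq_zero
    intro p hp
    rw [Finset.HasAntidiagonal.mem_antidiagonal] at hp
    by_cases h2 : p.2 = 0
    · rw [h2, ← coeff_zero_eq_constantCoeff_apply] at *
      rw [hg, mul_zero]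
    · have h2' : 1 ≤ (wt p.2) := by
        rcases Nat.eq_zero_or_pos (wt p.2) with h0 | h0
        · exact absurd (wt_eq_zero h0) h2
        · exact h0
      have : (wt p.1) < k := by
        have := wt_add p.1 p.2
        rw [hp] at this
        omega
      rw [ih p.1 this, zero_mul]

local notation "sbst" => PowerSeries.substMv

lemma coeff_substMv (f : PowerSeries A) (g : MvPowerSeries (Fin 2) A) (d : Fin 2 →₀ ℕ) :
    coeff d (sbst f g) =
      ∑ k ∈ Finset.range ((wt d) + 1), PowerSeries.coeff k f * coeff d (g ^ k) := rfl

lemma coeff_substMv_of {g : MvPowerSeries (Fin 2) A}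
    (hg : constantCoeff (σ := Fin 2) (R := A) g = 0) (f : PowerSeries A) (d : Fin 2 →₀ ℕ)
    {N : ℕ} (hN : (wt d) < N) :
    coeff d (sbst f g) =
      ∑ k ∈ Finset.range N, PowerSeries.coeff k f * coeff d (g ^ k) := by
  rw [coeff_substMv]
  apply Finset.sum_subset (Finset.range_subset_range.mpr (by omega))
  intro k _ hk
  rw [Finset.mem_range, not_lt] at hk
  rw [coeff_pow_eq_zero hg k d (by omega), mul_zero]

lemma substMv_add (f₁ f₂ : PowerSeries A) (g : MvPowerSeries (Fin 2) A) :
    sbst (f₁ + f₂) g = sbst f₁ g + sbst f₂ g := by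
  ext d
  rw [map_add, coeff_substMv, coeff_substMv, coeff_substMv, ← Finset.sum_add_distrib]
  exact Finset.sum_congr rfl fun k _ => by rw [map_add, add_mul]

lemma substMv_sub (f₁ f₂ : PowerSeries A) (g : MvPowerSeries (Fin 2) A) :
    sbst (f₁ - f₂) g = sbst f₁ g - sbst f₂ g := by
  ext d
  rw [map_sub, coeff_substMv, coeff_substMv, coeff_substMv, ← Finset.sum_sub_distrib]
  exact Finset.sum_congr rfl fun k _ => by rw [map_sub, sub_mul]

lemma substMv_one (g : MvPowerSeries (Fin 2) A) : sbst 1 g = 1 := by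
  ext d
  rw [coeff_substMv, Finset.sum_eq_single 0]
  · simp
  · intro k _ hk
    rw [PowerSeries.coeff_one, if_neg hk, zero_mul]
  · intro h
    exact absurd (Finset.mem_range.mpr (by omega)) h

lemma substMv_C_mul (c : A) (f : PowerSeries A) (g : MvPowerSeries (Fin 2) A) :
    sbst (PowerSeries.C (R := A) c * f) g = MvPowerSeries.C (σ := Fin 2) (R := A) c * sbst f g := by
  ext d
  rw [coeff_substMv, MvPowerSeries.coeff_C_mul, coeff_substMv, Finset.mul_sum]
  exact Finset.sum_congr rfl fun k _ => by
    rw [PowerSeries.coeff_C_mul, mul_assoc]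

lemma substMv_X {g : MvPowerSeries (Fin 2) A}
    (hg : constantCoeff (σ := Fin 2) (R := A) g = 0) : sbst PowerSeries.X g = g := by
  ext d
  by_cases hd : (wt d) = 0
  · have hd0 : d = 0 := wt_eq_zero hd
    subst hd0
    rw [coeff_substMv, Finsupp.sum_zero_index, Finset.sum_range_one, pow_zero]
    simp [PowerSeries.coeff_X, coeff_zero_eq_constantCoeff_apply, hg]
  · rw [coeff_substMv_of hg _ d (show (wt d) < (wt d) + 1 by omega),
      Finset.sum_eq_single 1]
    · rw [PowerSeries.coeff_X, if_pos rfl, pow_one, one_mul]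
    · intro k _ hk
      rw [PowerSeries.coeff_X, if_neg hk, zero_mul]
    · intro h
      exact absurd (Finset.mem_range.mpr (by omega)) h

lemma substMv_smul (q : ℚ) [Algebra ℚ A] (f : PowerSeries A) (g : MvPowerSeries (Fin 2) A) :
    sbst (q • f) g = q • sbst f g := by
  ext d
  have h1 : coeff d (q • sbst f g) = q • coeff d (sbst f g) := rfl
  rw [coeff_substMv, h1, coeff_substMv, Finset.smul_sum]
  exact Finset.sum_congr rfl fun k _ => by
    rw [PowerSeries.coeff_smul, smul_mul_assoc]

lemma substMv_rescale_neg_one (f : PowerSeries A) (g : MvPowerSeries (Fin 2) A) :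
    sbst (PowerSeries.rescale (-1) f) g = sbst f (-g) := by
  ext d
  rw [coeff_substMv, coeff_substMv]
  refine Finset.sum_congr rfl fun k _ => ?_
  rw [PowerSeries.coeff_rescale, show -g = (-1 : A) • g from (neg_one_smul A g).symm,
    smul_pow, MvPowerSeries.coeff_smul]
  ring

lemma substMv_X_mul {g : MvPowerSeries (Fin 2) A}
    (hg : constantCoeff (σ := Fin 2) (R := A) g = 0) (h : PowerSeries A) :
    sbst (PowerSeries.X * h) g = g * sbst h g := by
  ext d
  have key : coeff d (g * sbst h g) =
      ∑ j ∈ Finset.range ((wt d) + 1),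
        PowerSeries.coeff j h * coeff d (g ^ (j + 1)) := by
    rw [coeff_mul]
    have step : ∀ p ∈ antidiagonal d,
        coeff p.1 g * coeff p.2 (sbst h g) =
          ∑ j ∈ Finset.range ((wt d) + 1),
            PowerSeries.coeff j h * (coeff p.1 g * coeff p.2 (g ^ j)) := by
      intro p hp
      rw [Finset.HasAntidiagonal.mem_antidiagonal] at hp
      have hle : (wt p.2) < (wt d) + 1 := by
        have := wt_add p.1 p.2
        rw [hp] at this
        omega
      rw [coeff_substMv_of hg h p.2 hle, Finset.mul_sum]
      exact Finset.sum_congr rfl fun j _ => by ring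
    rw [Finset.sum_congr rfl step, Finset.sum_comm]
    refine Finset.sum_congr rfl fun j _ => ?_
    rw [← Finset.mul_sum, pow_succ', coeff_mul]
  rw [key, coeff_substMv, Finset.sum_range_succ' _ ((wt d))]
  have h0 : PowerSeries.coeff 0 (PowerSeries.X * h) = 0 := by
    simp [PowerSeries.coeff_zero_eq_constantCoeff]
  rw [h0, zero_mul, add_zero]
  rw [Finset.sum_range_succ _ ((wt d)), coeff_pow_eq_zero hg ((wt d) + 1) d (by omega),
    mul_zero, add_zero]
  exact Finset.sum_congr rfl fun k _ => by rw [PowerSeries.coeff_succ_X_mul]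

lemma C_mul_substMv_congr {a b : MvPowerSeries (Fin 2) A} (c : A)
    (hab : MvPowerSeries.C (σ := Fin 2) (R := A) c * (a - b) = 0) (h : PowerSeries A) :
    MvPowerSeries.C (σ := Fin 2) (R := A) c * sbst h a = MvPowerSeries.C (σ := Fin 2) (R := A) c * sbst h b := by
  have key : ∀ k : ℕ, MvPowerSeries.C (σ := Fin 2) (R := A) c * a ^ k
      = MvPowerSeries.C (σ := Fin 2) (R := A) c * b ^ k := by
    intro k
    obtain ⟨t, ht⟩ := sub_dvd_pow_sub_pow a b k
    have h0 : MvPowerSeries.C (σ := Fin 2) (R := A) c * (a ^ k - b ^ k) = 0 := by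
      rw [ht, ← mul_assoc, hab, zero_mul]
    rw [mul_sub, sub_eq_zero] at h0
    exact h0
  ext d
  rw [coeff_C_mul, coeff_C_mul, coeff_substMv, coeff_substMv, Finset.mul_sum,
    Finset.mul_sum]
  refine Finset.sum_congr rfl fun k _ => ?_
  have : c * coeff d (a ^ k) = c * coeff d (b ^ k) := by
    rw [← coeff_C_mul, ← coeff_C_mul, key k]
  calc c * (PowerSeries.coeff k h * coeff d (a ^ k))
      = PowerSeries.coeff k h * (c * coeff d (a ^ k)) := by ring
    _ = PowerSeries.coeff k h * (c * coeff d (b ^ k)) := by rw [this]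
    _ = c * (PowerSeries.coeff k h * coeff d (b ^ k)) := by ring

lemma constantCoeff_substMv (f : PowerSeries A) (g : MvPowerSeries (Fin 2) A) :
    constantCoeff (σ := Fin 2) (R := A) (sbst f g) = PowerSeries.constantCoeff f := by
  rw [← coeff_zero_eq_constantCoeff_apply, coeff_substMv, Finsupp.sum_zero_index,
    Finset.sum_range_one, pow_zero]
  simp

end Lemmas

set_option maxHeartbeats 2000000 in
/-- over the dual numbers `A = ℚ[ε]`, with `f = 1 + ε(exp X − 1)` and
`g = X + 2εX(cosh X − 1)`, one has, in `A[[x, y]]`,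
`(x − y)·f(g(x) − g(y))·f(g(y) − g(x))
  = (g(x) − g(y)) + 2ε((x − y)·cosh(x − y) − (x·cosh x − y·cosh y))`. -/
theorem statement9 :
    let A := DualNumber ℚ
    let E : PowerSeries A := PowerSeries.exp A
    let cosh : PowerSeries A := (1 / 2 : ℚ) • (E + PowerSeries.rescale (-1) E)
    let f : PowerSeries A := 1 + PowerSeries.C (R := A) DualNumber.eps * (E - 1)
    let g : PowerSeries A :=
      PowerSeries.X + 2 * PowerSeries.C (R := A) DualNumber.eps * PowerSeries.X * (cosh - 1)
    let x : MvPowerSeries (Fin 2) A := MvPowerSeries.X 0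
    let y : MvPowerSeries (Fin 2) A := MvPowerSeries.X 1
    let gx : MvPowerSeries (Fin 2) A := PowerSeries.substMv g x
    let gy : MvPowerSeries (Fin 2) A := PowerSeries.substMv g y
    (x - y) * PowerSeries.substMv f (gx - gy) * PowerSeries.substMv f (gy - gx)
      = (gx - gy) +
          2 * MvPowerSeries.C (σ := Fin 2) (R := A) DualNumber.eps *
            ((x - y) * PowerSeries.substMv cosh (x - y) -
              (x * PowerSeries.substMv cosh x - y * PowerSeries.substMv cosh y)) := by
  intro A E cosh f g x y gx gy
  have hcosh : cosh = (1 / 2 : ℚ) • (E + PowerSeries.rescale (-1) E) := rfl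
  have hfdef : f = 1 + PowerSeries.C (R := A) DualNumber.eps * (E - 1) := rfl
  have hgdef : g = PowerSeries.X
      + 2 * PowerSeries.C (R := A) DualNumber.eps * PowerSeries.X * (cosh - 1) := rfl
  have hgxdef : gx = PowerSeries.substMv g x := rfl
  have hgydef : gy = PowerSeries.substMv g y := rfl
  set ε' : MvPowerSeries (Fin 2) A := MvPowerSeries.C (σ := Fin 2) (R := A) DualNumber.eps with hε'
  have hεε : ε' * ε' = 0 := by
    rw [hε', ← map_mul, DualNumber.eps_mul_eps, map_zero]
  have hx : MvPowerSeries.constantCoeff (σ := Fin 2) (R := A) x = 0 := MvPowerSeries.constantCoeff_X 0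
  have hy : MvPowerSeries.constantCoeff (σ := Fin 2) (R := A) y = 0 := MvPowerSeries.constantCoeff_X 1
  -- abbreviations
  set cx := PowerSeries.substMv cosh x with hcx
  set cy := PowerSeries.substMv cosh y with hcy
  set cw := PowerSeries.substMv cosh (x - y) with hcw
  set Ew := PowerSeries.substMv E (x - y) with hEw
  set Ew' := PowerSeries.substMv E (-(x - y)) with hEw'
  set Ea := PowerSeries.substMv E (gx - gy) with hEa
  set Eb := PowerSeries.substMv E (gy - gx) with hEb
  -- splitting of g
  have hgsplit : g = PowerSeries.X + PowerSeries.C (R := A) DualNumber.eps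
      * (PowerSeries.X * ((cosh - 1) + (cosh - 1))) := by rw [hgdef]; ring
  -- computation of gx, gy
  have hgx : gx = x + ε' * (x * ((cx - 1) + (cx - 1))) := by
    rw [hgxdef, hgsplit, substMv_add, substMv_X hx, substMv_C_mul, substMv_X_mul hx,
      substMv_add, substMv_sub, substMv_one, ← hcx, hε']
  have hgy : gy = y + ε' * (y * ((cy - 1) + (cy - 1))) := by
    rw [hgydef, hgsplit, substMv_add, substMv_X hy, substMv_C_mul, substMv_X_mul hy,
      substMv_add, substMv_sub, substMv_one, ← hcy, hε']
  -- computation of the two substitutions of f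
  have hf1 : PowerSeries.substMv f (gx - gy) = 1 + ε' * (Ea - 1) := by
    rw [hfdef, substMv_add, substMv_one, substMv_C_mul, substMv_sub, substMv_one,
      ← hEa, hε']
  have hf2 : PowerSeries.substMv f (gy - gx) = 1 + ε' * (Eb - 1) := by
    rw [hfdef, substMv_add, substMv_one, substMv_C_mul, substMv_sub, substMv_one,
      ← hEb, hε']
  -- epsilon-congruences
  have h5 : ε' * Ea = ε' * Ew := by
    rw [hEa, hEw, hε']
    apply C_mul_substMv_congr
    rw [← hε']
    have : gx - gy - (x - y)
        = ε' * (x * ((cx - 1) + (cx - 1)) - y * ((cy - 1) + (cy - 1))) := by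
      rw [hgx, hgy]; ring
    rw [this, ← mul_assoc, hεε, zero_mul]
  have h6 : ε' * Eb = ε' * Ew' := by
    rw [hEb, hEw', hε']
    apply C_mul_substMv_congr
    rw [← hε']
    have : gy - gx - -(x - y)
        = ε' * (y * ((cy - 1) + (cy - 1)) - x * ((cx - 1) + (cx - 1))) := by
      rw [hgx, hgy]; ring
    rw [this, ← mul_assoc, hεε, zero_mul]
  -- cosh identity
  have h7 : Ew + Ew' = 2 * cw := by
    rw [hcw, hcosh, substMv_smul, substMv_add, substMv_rescale_neg_one, ← hEw, ← hEw',
      two_mul, ← add_smul]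
    norm_num
  rw [hf1, hf2, hgx, hgy]
  linear_combination (x - y) * h5 + (x - y) * h6 + (x - y) * ε' * h7
    + ((x - y) * (Ea - 1) * (Eb - 1)) * hεε
end
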